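/- arXiv:2601.11892 — 2 statements merged into one kernel-verified Lean document; each statement's English description precedes it below -/
import Mathlib

section
/- The generalized continued fraction with partial numerators a_1 = 1, a_n = (2n−3)² for n ≥ 2, and partial denominators b_1 = 1, b_n = 2 for n ≥ 2 converges to π/4. -/
/-- `cfAux a b k m` : finite continued fraction with `m` levels starting at index `k`. -/
noncomputable def cfAux (a b : ℕ → ℝ) : ℕ → ℕ → ℝ
  | _, 0 => 0
  | k, m + 1 => a k / (b k + cfAux a b (k + 1) m)

/-- The `n`-th convergent `a 1 / (b 1 + a 2 / (b 2 + ⋯ + a n / b n))`. -/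
noncomputable def convergent (a b : ℕ → ℝ) (n : ℕ) : ℝ := cfAux a b 1 n

/-- Tail alternating sum `S k m = ∑_{j=0}^m (-1)^j / (2(k+j)-3)`. -/
noncomputable def Stail : ℕ → ℕ → ℝ
  | k, 0 => 1 / (2 * (k : ℝ) - 3)
  | k, m + 1 => 1 / (2 * (k : ℝ) - 3) - Stail (k + 1) m

lemma Stail_bounds : ∀ m k, 2 ≤ k → 0 < Stail k m ∧ Stail k m ≤ 1 / (2 * (k : ℝ) - 3) := by
  intro m
  induction m with
  | zero =>
    intro k hk
    have h1 : (1 : ℝ) ≤ 2 * (k : ℝ) - 3 := by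
      have : (2 : ℝ) ≤ (k : ℝ) := by exact_mod_cast hk
      linarith
    constructor
    · simp only [Stail]; positivity
    · simp [Stail]
  | succ m ih =>
    intro k hk
    have h1 : (1 : ℝ) ≤ 2 * (k : ℝ) - 3 := by
      have : (2 : ℝ) ≤ (k : ℝ) := by exact_mod_cast hk
      linarith
    obtain ⟨hpos, hle⟩ := ih (k + 1) (by omega)
    have hcast : (↑(k + 1) : ℝ) = (k : ℝ) + 1 := by push_cast; ring
    rw [hcast] at hle
    have hlt : Stail (k + 1) m < 1 / (2 * (k : ℝ) - 3) := by
      calc Stail (k + 1) m ≤ 1 / (2 * ((k : ℝ) + 1) - 3) := hle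
        _ < 1 / (2 * (k : ℝ) - 3) := by
            apply one_div_lt_one_div_of_lt <;> linarith
    constructor
    · simp only [Stail]; linarith
    · simp only [Stail]; linarith

lemma cfAux_eq (a b : ℕ → ℝ)
    (ha : ∀ n, 2 ≤ n → a n = (2*(n : ℝ) - 3)^2)
    (hb : ∀ n, 2 ≤ n → b n = 2) :
    ∀ m k, 2 ≤ k → cfAux a b k m = (1 - (2 * (k : ℝ) - 3) * Stail k m) / Stail k m := by
  intro m
  induction m with
  | zero =>
    intro k hk
    have h1 : (1 : ℝ) ≤ 2 * (k : ℝ) - 3 := by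
      have : (2 : ℝ) ≤ (k : ℝ) := by exact_mod_cast hk
      linarith
    have hne : 2 * (k : ℝ) - 3 ≠ 0 := by linarith
    simp only [cfAux, Stail]
    field_simp
    ring
  | succ m ih =>
    intro k hk
    have h1 : (1 : ℝ) ≤ 2 * (k : ℝ) - 3 := by
      have : (2 : ℝ) ≤ (k : ℝ) := by exact_mod_cast hk
      linarith
    obtain ⟨hpos, hle⟩ := Stail_bounds m (k + 1) (by omega)
    have hcast : (↑(k + 1) : ℝ) = (k : ℝ) + 1 := by push_cast; ring
    rw [hcast] at hle
    have hlt : (2 * (k : ℝ) - 3) * Stail (k + 1) m < 1 := by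
      have h2 : Stail (k + 1) m ≤ 1 / (2 * (k : ℝ) - 1) := by
        have : 2 * ((k : ℝ) + 1) - 3 = 2 * (k : ℝ) - 1 := by ring
        rwa [this] at hle
      have h3 : (0 : ℝ) < 2 * (k : ℝ) - 1 := by linarith
      have h4 : (2 * (k : ℝ) - 3) * Stail (k + 1) m ≤ (2 * (k : ℝ) - 3) * (1 / (2 * (k : ℝ) - 1)) :=
        mul_le_mul_of_nonneg_left h2 (by linarith)
      have h5 : (2 * (k : ℝ) - 3) * (1 / (2 * (k : ℝ) - 1)) < 1 := by
        rw [mul_one_div, div_lt_one h3]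
        linarith
      linarith
    have hS1 : (0 : ℝ) < Stail k (m + 1) := by
      have := (Stail_bounds (m + 1) k hk).1
      exact this
    simp only [cfAux]
    rw [ih (k + 1) (by omega), ha k hk, hb k hk, hcast]
    have hSrec : Stail k (m + 1) = 1 / (2 * (k : ℝ) - 3) - Stail (k + 1) m := rfl
    have hne3 : 2 * (k : ℝ) - 3 ≠ 0 := by linarith
    have hne1 : Stail (k + 1) m ≠ 0 := ne_of_gt hpos
    have hden : 2 + (1 - (2 * ((k : ℝ) + 1) - 3) * Stail (k + 1) m) / Stail (k + 1) m
        = (1 - (2 * (k : ℝ) - 3) * Stail (k + 1) m) / Stail (k + 1) m := by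
      field_simp; ring
    rw [hden, hSrec]
    have hne2 : 1 - (2 * (k : ℝ) - 3) * Stail (k + 1) m ≠ 0 := by linarith
    have hS1' : 1 / (2 * (k : ℝ) - 3) - Stail (k + 1) m ≠ 0 := by
      rw [← hSrec]; exact ne_of_gt hS1
    field_simp
    ring

lemma Stail_eq_sum : ∀ m k, Stail k m = ∑ i ∈ Finset.range (m + 1),
    (-1 : ℝ) ^ i / (2 * ((k : ℝ) + i) - 3) := by
  intro m
  induction m with
  | zero => intro k; simp [Stail]
  | succ m ih =>
    intro k
    have hsum : ∑ i ∈ Finset.range (m + 1), (-1 : ℝ) ^ (i + 1) / (2 * ((k : ℝ) + (↑(i + 1) : ℝ)) - 3)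
        = -Stail (k + 1) m := by
      rw [ih (k + 1), ← Finset.sum_neg_distrib]
      apply Finset.sum_congr rfl
      intro i _
      push_cast
      rw [pow_succ]
      ring
    rw [Finset.sum_range_succ', hsum]
    simp only [Stail]
    push_cast
    ring

theorem stmt_15 (a b : ℕ → ℝ)
    (ha1 : a 1 = 1) (ha : ∀ n, 2 ≤ n → a n = (2*(n : ℝ) - 3)^2)
    (hb1 : b 1 = 1) (hb : ∀ n, 2 ≤ n → b n = 2) :
    Filter.Tendsto (fun n => convergent a b n) Filter.atTop (nhds (Real.pi / 4)) := by
  have key : ∀ n, convergent a b n = ∑ i ∈ Finset.range n, (-1 : ℝ) ^ i / (2 * i + 1) := by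
    intro n
    cases n with
    | zero => simp [convergent, cfAux]
    | succ m =>
      have h1 : convergent a b (m + 1) = Stail 2 m := by
        unfold convergent
        simp only [cfAux]
        rw [ha1, hb1, cfAux_eq a b ha hb m 2 le_rfl]
        have : (2 * ((2 : ℕ) : ℝ) - 3) = 1 := by norm_num
        rw [this]
        have hpos := (Stail_bounds m 2 le_rfl).1
        field_simp
        ring
      rw [h1, Stail_eq_sum m 2]
      apply Finset.sum_congr rfl
      intro i _
      congr 1
      push_cast
      ring
  simpa only [key] using Real.tendsto_sum_pi_div_four
end

section
/- The generalized continued fraction with partial numerators a_1 = 1, a_n = (n−1)² for n ≥ 2, and partial denominators b_n = −(2n−1) for n ≥ 1 converges, and its value is −π/4. -/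
noncomputable def AA : ℕ → ℝ
  | 0 => 0
  | 1 => 1
  | (n+2) => -(2*(n:ℝ)+3) * AA (n+1) + ((n:ℝ)+1)^2 * AA n

noncomputable def BB : ℕ → ℝ
  | 0 => 1
  | 1 => -1
  | (n+2) => -(2*(n:ℝ)+3) * BB (n+1) + ((n:ℝ)+1)^2 * BB n

noncomputable def cfX (a b : ℕ → ℝ) : ℕ → ℕ → ℝ → ℝ
  | _, 0, x => x
  | k, m+1, x => a k / (b k + cfX a b (k+1) m x)

lemma cfX_zero (a b : ℕ → ℝ) : ∀ m k, cfX a b k m 0 = cfAux a b k m := by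
  intro m
  induction m with
  | zero => intro k; rfl
  | succ m ih => intro k; simp [cfX, cfAux, ih]

lemma cfX_succ (a b : ℕ → ℝ) : ∀ m k x, cfX a b k (m+1) x = cfX a b k m (a (k+m) / (b (k+m) + x)) := by
  intro m
  induction m with
  | zero => intro k x; rfl
  | succ m ih =>
    intro k x
    show a k / (b k + cfX a b (k+1) (m+1) x) = a k / (b k + cfX a b (k+1) m _)
    have hidx : k+1+m = k+(m+1) := by omega
    rw [ih (k+1) x, hidx]

lemma div_div_aux (u v d : ℝ) (hd : d ≠ 0) : (u/d)/(v/d) = u/v := by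
  rcases eq_or_ne v 0 with h | h
  · simp [h]
  · field_simp

lemma conv_eq (a b : ℕ → ℝ)
    (ha1 : a 1 = 1) (ha : ∀ n, 2 ≤ n → a n = ((n : ℝ) - 1)^2)
    (hb : ∀ n, 1 ≤ n → b n = -(2*(n : ℝ) - 1)) :
    ∀ n, ∀ x ≤ (0:ℝ), cfX a b 1 (n+1) x = (AA (n+1) + x * AA n)/(BB (n+1) + x * BB n) := by
  intro n
  induction n with
  | zero =>
    intro x hx
    show a 1 / (b 1 + cfX a b 2 0 x) = _
    rw [ha1, hb 1 le_rfl]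
    simp [cfX, AA, BB]
    norm_num
  | succ n ih =>
    intro x hx
    rw [cfX_succ]
    have h2 : (2:ℕ) ≤ 1 + (n+1) := by omega
    have hidx : 1 + (n+1) = n + 2 := by omega
    rw [hidx]
    rw [ha (n+2) (by omega), hb (n+2) (by omega)]
    push_cast
    set d : ℝ := -(2 * ((n:ℝ) + 2) - 1) + x with hd_def
    have hd : d < 0 := by
      have h0 : (0:ℝ) ≤ (n:ℝ) := Nat.cast_nonneg n
      rw [hd_def]; nlinarith
    have hdne : d ≠ 0 := ne_of_lt hd
    have hy : (((n:ℝ)+2) - 1)^2 / d ≤ 0 :=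
      div_nonpos_of_nonneg_of_nonpos (sq_nonneg _) hd.le
    rw [ih _ hy]
    have hA : AA (n+2) = -(2*(n:ℝ)+3) * AA (n+1) + ((n:ℝ)+1)^2 * AA n := by simp [AA]
    have hB : BB (n+2) = -(2*(n:ℝ)+3) * BB (n+1) + ((n:ℝ)+1)^2 * BB n := by simp [BB]
    have e1 : AA (n+1) + (((n:ℝ)+2) - 1)^2 / d * AA n = (d * AA (n+1) + ((n:ℝ)+1)^2 * AA n)/d := by
      field_simp; ring
    have e2 : BB (n+1) + (((n:ℝ)+2) - 1)^2 / d * BB n = (d * BB (n+1) + ((n:ℝ)+1)^2 * BB n)/d := by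
      field_simp; ring
    rw [e1, e2, div_div_aux _ _ _ hdne, hA, hB]
    congr 1 <;> ring

noncomputable def fcC (n : ℕ) (z : ℂ) : ℂ := (1 - z^2)^n / (z - Complex.I)^(n+1)

noncomputable def fc (n : ℕ) (t : ℝ) : ℂ := fcC n (t:ℂ)

noncomputable def HH (n : ℕ) : ℂ := ∫ t in (-1:ℝ)..1, fc n t

lemma hti (t : ℝ) : (t:ℂ) - Complex.I ≠ 0 := by
  intro h
  have := congrArg Complex.im h
  simp at this

lemma fc_cont (n : ℕ) : Continuous (fc n) := by
  apply Continuous.div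
  · fun_prop
  · fun_prop
  · exact fun t => pow_ne_zero _ (hti t)

noncomputable def FFcC (n : ℕ) (z : ℂ) : ℂ :=
  (1 - z^2)^(n+1) * (-(z - Complex.I)^2 - 2) / (z - Complex.I)^(n+2)

lemma FFcC_deriv (n : ℕ) (z : ℂ) (hz : z - Complex.I ≠ 0) :
    HasDerivAt (FFcC n)
      (((n:ℂ)+2)*fcC (n+2) z + 2*(2*(n:ℂ)+3)*Complex.I*fcC (n+1) z + 4*((n:ℂ)+1)*fcC n z) z := by
  have h1 : HasDerivAt (fun z : ℂ => 1 - z^2) (-(2*z)) z := by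
    simpa using ((hasDerivAt_pow 2 z).const_sub 1)
  have h2 : HasDerivAt (fun z : ℂ => (1 - z^2)^(n+1))
      ((n+1) * (1 - z^2)^n * (-(2*z))) z := by
    simpa using h1.fun_pow (n+1)
  have h3 : HasDerivAt (fun z : ℂ => z - Complex.I) 1 z := (hasDerivAt_id z).sub_const _
  have h4 : HasDerivAt (fun z : ℂ => -(z - Complex.I)^2 - 2)
      (-(2*(z - Complex.I))) z := by
    have := ((h3.pow 2).neg).sub_const (2:ℂ)
    simpa using this
  have h5 := h2.mul h4
  have h6 : HasDerivAt (fun z : ℂ => (z - Complex.I)^(n+2))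
      ((n+2) * (z - Complex.I)^(n+1) * 1) z := by
    simpa using h3.fun_pow (n+2)
  have h7 := h5.div h6 (pow_ne_zero _ hz)
  refine HasDerivAt.congr_deriv (f := FFcC n) h7 ?_
  symm
  simp only [Pi.mul_apply]
  rw [fcC, fcC, fcC]
  have e2 : Complex.I^2 = -1 := Complex.I_sq
  have e3 : Complex.I^3 = -Complex.I := by rw [pow_succ, e2]; ring
  have e4 : Complex.I^4 = 1 := by rw [pow_succ, e3]; simp [Complex.I_mul_I]
  have e5 : Complex.I^5 = Complex.I := by rw [pow_succ, e4]; ring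
  have e6 : Complex.I^6 = -1 := by rw [pow_succ, e5]; simp [Complex.I_mul_I]
  have e7 : Complex.I^7 = -Complex.I := by rw [pow_succ, e6]; ring
  have e8 : Complex.I^8 = 1 := by rw [pow_succ, e7]; simp [Complex.I_mul_I]
  have e9 : Complex.I^9 = Complex.I := by rw [pow_succ, e8]; ring
  have e10 : Complex.I^10 = -1 := by rw [pow_succ, e9]; simp [Complex.I_mul_I]
  field_simp
  ring_nf
  simp only [e2, e3, e4, e5, e6, e7, e8, e9, e10]
  ring

noncomputable def FFc (n : ℕ) (t : ℝ) : ℂ := FFcC n (t:ℂ)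

lemma FFc_deriv (n : ℕ) (t : ℝ) :
    HasDerivAt (FFc n)
      (((n:ℂ)+2)*fc (n+2) t + 2*(2*(n:ℂ)+3)*Complex.I*fc (n+1) t + 4*((n:ℂ)+1)*fc n t) t :=
  (FFcC_deriv n _ (hti t)).comp_ofReal

lemma HH_rec (n : ℕ) :
    ((n:ℂ)+2) * HH (n+2) = -2*(2*(n:ℂ)+3)*Complex.I*HH (n+1) - 4*((n:ℂ)+1)*HH n := by
  have hcont : Continuous (fun t => ((n:ℂ)+2)*fc (n+2) t + 2*(2*(n:ℂ)+3)*Complex.I*fc (n+1) t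
      + 4*((n:ℂ)+1)*fc n t) := by
    exact ((continuous_const.mul (fc_cont (n+2))).add (continuous_const.mul (fc_cont (n+1)))).add
      (continuous_const.mul (fc_cont n))
  have key := intervalIntegral.integral_eq_sub_of_hasDerivAt
    (f := FFc n) (a := (-1:ℝ)) (b := 1)
    (fun t _ => FFc_deriv n t) (hcont.intervalIntegrable _ _)
  have hF1 : FFc n 1 = 0 := by
    simp [FFc, FFcC]
  have hFm1 : FFc n (-1) = 0 := by
    simp [FFc, FFcC]
  rw [hF1, hFm1, sub_zero] at key
  rw [intervalIntegral.integral_add, intervalIntegral.integral_add] at key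
  · rw [intervalIntegral.integral_const_mul, intervalIntegral.integral_const_mul,
      intervalIntegral.integral_const_mul] at key
    simp only [HH]
    linear_combination key
  · exact (continuous_const.mul (fc_cont (n+2))).intervalIntegrable _ _
  · exact (continuous_const.mul (fc_cont (n+1))).intervalIntegrable _ _
  · exact ((continuous_const.mul (fc_cont (n+2))).add (continuous_const.mul (fc_cont (n+1)))).intervalIntegrable _ _
  · exact (continuous_const.mul (fc_cont n)).intervalIntegrable _ _

lemma coe_sq_add_one_ne (t : ℝ) : ((t:ℂ)^2 + 1) ≠ 0 := by
  have e : ((t:ℂ)^2 + 1) = ((t^2 + 1 : ℝ) : ℂ) := by push_cast; ring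
  rw [e]
  exact_mod_cast (by positivity : (t^2+1:ℝ) ≠ 0)

lemma one_add_sq_pos (t : ℝ) : (0:ℝ) < 1 + t^2 := by positivity

lemma int_odd1 : (∫ t in (-1:ℝ)..1, t/(1+t^2)) = 0 := by
  have h : ∀ t : ℝ, HasDerivAt (fun t : ℝ => Real.log (1+t^2) / 2) (t/(1+t^2)) t := by
    intro t
    have h1 : HasDerivAt (fun t : ℝ => 1 + t^2) (2*t) t := by
      simpa using ((hasDerivAt_pow 2 t).const_add 1)
    have h2 := (h1.log (by positivity)).div_const 2
    refine h2.congr_deriv ?_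
    symm
    field_simp
  rw [intervalIntegral.integral_eq_sub_of_hasDerivAt (fun t _ => h t)]
  · norm_num
  · apply Continuous.intervalIntegrable
    exact continuous_id.div (by fun_prop) (fun t => (one_add_sq_pos t).ne')

lemma int_even1 : (∫ t in (-1:ℝ)..1, 1/(1+t^2)) = Real.pi/2 := by
  rw [integral_one_div_one_add_sq]
  rw [Real.arctan_one, Real.arctan_neg, Real.arctan_one]
  ring

lemma HH0 : HH 0 = (Real.pi/2 : ℝ) * Complex.I := by
  have hfc : ∀ t : ℝ, fc 0 t = ((t/(1+t^2) : ℝ) : ℂ) + ((1/(1+t^2) : ℝ) : ℂ) * Complex.I := by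
    intro t
    rw [fc, fcC]
    have h1 : ((1+t^2 : ℝ) : ℂ) ≠ 0 := by
      exact_mod_cast (one_add_sq_pos t).ne'
    have h2 := hti t
    push_cast
    push_cast at h1
    field_simp
    ring_nf
    rw [Complex.I_sq]
    ring
  rw [HH]
  rw [intervalIntegral.integral_congr (g := fun t => ((t/(1+t^2) : ℝ) : ℂ) + ((1/(1+t^2) : ℝ) : ℂ) * Complex.I) (fun t _ => hfc t)]
  rw [intervalIntegral.integral_add, intervalIntegral.integral_mul_const]
  · rw [intervalIntegral.integral_ofReal, intervalIntegral.integral_ofReal]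
    rw [int_odd1, int_even1]
    simp
  · apply Continuous.intervalIntegrable
    have : Continuous fun t : ℝ => t/(1+t^2) :=
      continuous_id.div (by fun_prop) (fun t => (one_add_sq_pos t).ne')
    fun_prop
  · apply Continuous.intervalIntegrable
    have : Continuous fun t : ℝ => 1/(1+t^2) :=
      continuous_const.div (by fun_prop) (fun t => (one_add_sq_pos t).ne')
    fun_prop

lemma int_even2 : (∫ t in (-1:ℝ)..1, -((1-t^2)^2/(1+t^2)^2)) = Real.pi - 4 := by
  have h : ∀ t : ℝ, HasDerivAt (fun t : ℝ => -(t - 2*Real.arctan t + 2*t/(1+t^2)))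
      (-((1-t^2)^2/(1+t^2)^2)) t := by
    intro t
    have h0 : (1+t^2) ≠ 0 := (one_add_sq_pos t).ne'
    have h1 : HasDerivAt (fun t : ℝ => 1 + t^2) (2*t) t := by
      simpa using ((hasDerivAt_pow 2 t).const_add 1)
    have h2 : HasDerivAt (fun t : ℝ => 2*t) 2 t := by
      simpa using (hasDerivAt_id t).const_mul 2
    have h3 := h2.div h1 h0
    have h4 := ((hasDerivAt_id t).sub ((Real.hasDerivAt_arctan t).const_mul 2)).add h3
    have h5 := h4.neg
    refine h5.congr_deriv ?_
    symm
    field_simp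
    ring
  rw [intervalIntegral.integral_eq_sub_of_hasDerivAt (fun t _ => h t)]
  · rw [Real.arctan_one, Real.arctan_neg, Real.arctan_one]
    norm_num
    ring
  · apply Continuous.intervalIntegrable
    exact ((by fun_prop : Continuous fun t:ℝ => (1-t^2)^2).div (by fun_prop)
      (fun t => pow_ne_zero 2 (one_add_sq_pos t).ne')).neg

lemma int_odd2 : (∫ t in (-1:ℝ)..1, 2*t*(1-t^2)/(1+t^2)^2) = 0 := by
  have h : ∀ t : ℝ, HasDerivAt (fun t : ℝ => -2/(1+t^2) - Real.log (1+t^2))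
      (2*t*(1-t^2)/(1+t^2)^2) t := by
    intro t
    have h0 : (1+t^2) ≠ 0 := (one_add_sq_pos t).ne'
    have h1 : HasDerivAt (fun t : ℝ => 1 + t^2) (2*t) t := by
      simpa using ((hasDerivAt_pow 2 t).const_add 1)
    have h2 := (hasDerivAt_const t (-2:ℝ)).div h1 h0
    have h3 := h2.sub (h1.log h0)
    refine h3.congr_deriv ?_
    symm
    field_simp
    ring
  rw [intervalIntegral.integral_eq_sub_of_hasDerivAt (fun t _ => h t)]
  · norm_num
  · apply Continuous.intervalIntegrable
    exact (by fun_prop : Continuous fun t:ℝ => 2*t*(1-t^2)).div (by fun_prop)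
      (fun t => pow_ne_zero 2 (one_add_sq_pos t).ne')

lemma HH1 : HH 1 = ((Real.pi - 4 : ℝ) : ℂ) := by
  have hfc : ∀ t : ℝ, fc 1 t = ((-((1-t^2)^2/(1+t^2)^2) : ℝ) : ℂ)
      + ((2*t*(1-t^2)/(1+t^2)^2 : ℝ) : ℂ) * Complex.I := by
    intro t
    rw [fc, fcC]
    have h1 : ((1+t^2 : ℝ) : ℂ) ≠ 0 := by
      exact_mod_cast (one_add_sq_pos t).ne'
    have h2 := hti t
    push_cast
    push_cast at h1
    field_simp
    ring_nf
    rw [show (Complex.I:ℂ)^3 = -Complex.I by rw [pow_succ, Complex.I_sq]; ring, Complex.I_sq]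
    ring
  rw [HH]
  rw [intervalIntegral.integral_congr (g := fun t => ((-((1-t^2)^2/(1+t^2)^2) : ℝ) : ℂ)
      + ((2*t*(1-t^2)/(1+t^2)^2 : ℝ) : ℂ) * Complex.I) (fun t _ => hfc t)]
  rw [intervalIntegral.integral_add, intervalIntegral.integral_mul_const]
  · rw [intervalIntegral.integral_ofReal, intervalIntegral.integral_ofReal]
    rw [int_odd2, int_even2]
    simp
  · apply Continuous.intervalIntegrable
    have : Continuous fun t : ℝ => -((1-t^2)^2/(1+t^2)^2) :=
      ((by fun_prop : Continuous fun t:ℝ => (1-t^2)^2).div (by fun_prop)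
        (fun t => pow_ne_zero 2 (one_add_sq_pos t).ne')).neg
    fun_prop
  · apply Continuous.intervalIntegrable
    have : Continuous fun t : ℝ => 2*t*(1-t^2)/(1+t^2)^2 :=
      (by fun_prop : Continuous fun t:ℝ => 2*t*(1-t^2)).div (by fun_prop)
        (fun t => pow_ne_zero 2 (one_add_sq_pos t).ne')
    fun_prop

noncomputable def Dc (n : ℕ) : ℂ := -(n.factorial : ℂ) * (-1)^n * (Complex.I/2)^(n+1) * HH n

lemma keyD : ∀ n : ℕ, ((AA n + BB n * (Real.pi/4) : ℝ) : ℂ) = Dc n := by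
  intro n
  induction n using Nat.twoStepInduction with
  | zero =>
    simp [Dc, HH0, AA, BB]
    push_cast
    ring_nf
    rw [Complex.I_sq]
    ring
  | one =>
    simp [Dc, HH1, AA, BB]
    push_cast
    ring_nf
    rw [Complex.I_sq]
    ring
  | more n ih ih1 =>
    have hA : AA (n+2) = -(2*(n:ℝ)+3) * AA (n+1) + ((n:ℝ)+1)^2 * AA n := by simp [AA]
    have hB : BB (n+2) = -(2*(n:ℝ)+3) * BB (n+1) + ((n:ℝ)+1)^2 * BB n := by simp [BB]
    have e1 : ((AA (n+2) + BB (n+2) * (Real.pi/4) : ℝ) : ℂ)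
        = -(2*(n:ℂ)+3) * ((AA (n+1) + BB (n+1)*(Real.pi/4) : ℝ) : ℂ)
          + ((n:ℂ)+1)^2 * ((AA n + BB n*(Real.pi/4) : ℝ) : ℂ) := by
      rw [hA, hB]; push_cast; ring
    rw [e1, ih, ih1]
    have hne : ((n:ℂ)+2) ≠ 0 := by
      have : ((n+2 : ℕ) : ℂ) ≠ 0 := Nat.cast_ne_zero.mpr (by omega)
      push_cast at this
      exact this
    have hH2 : HH (n+2) = (-2*(2*(n:ℂ)+3)*Complex.I*HH (n+1) - 4*((n:ℂ)+1)*HH n) / ((n:ℂ)+2) := by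
      field_simp
      linear_combination HH_rec n
    have e2 : Complex.I^2 = -1 := Complex.I_sq
    have e3 : Complex.I^3 = -Complex.I := by rw [pow_succ, e2]; ring
    have e4 : Complex.I^4 = 1 := by rw [pow_succ, e3]; simp [Complex.I_mul_I]
    simp only [Dc, hH2, Nat.factorial_succ]
    push_cast
    field_simp
    ring_nf
    simp only [e2, e3, e4]
    ring

lemma normHH_le (n : ℕ) : ‖HH n‖ ≤ 2 := by
  have key : ∀ t ∈ Set.uIoc (-1:ℝ) 1, ‖fc n t‖ ≤ 1 := by
    intro t ht
    rw [Set.uIoc_of_le (by norm_num : (-1:ℝ) ≤ 1)] at ht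
    have ht2 : t^2 ≤ 1 := by nlinarith [ht.1, ht.2]
    rw [fc, fcC, norm_div, norm_pow, norm_pow]
    have h1 : ‖1 - (t:ℂ)^2‖ ≤ 1 := by
      have : (1 - (t:ℂ)^2) = ((1 - t^2 : ℝ) : ℂ) := by push_cast; ring
      rw [this, Complex.norm_real, Real.norm_eq_abs, abs_of_nonneg (by nlinarith)]
      nlinarith [sq_nonneg t]
    have h2 : (1:ℝ) ≤ ‖(t:ℂ) - Complex.I‖ := by
      have hsq : (‖(t:ℂ) - Complex.I‖)^2 = t^2 + 1 := by
        rw [Complex.sq_norm, Complex.normSq_apply]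
        simp
        ring
      nlinarith [norm_nonneg ((t:ℂ) - Complex.I)]
    calc ‖1 - (t:ℂ)^2‖ ^ n / ‖(t:ℂ) - Complex.I‖ ^ (n+1)
        ≤ 1 / 1 := by
          apply div_le_div₀ (by norm_num)
          · exact pow_le_one₀ (norm_nonneg _) h1
          · norm_num
          · exact one_le_pow₀ h2
      _ = 1 := by norm_num
  have := intervalIntegral.norm_integral_le_of_norm_le_const (C := 1) (f := fc n)
    (a := (-1:ℝ)) (b := 1) (fun t ht => key t ht)
  rw [HH]
  refine le_trans this ?_
  norm_num

lemma absDc_le (n : ℕ) : ‖Dc n‖ ≤ (n.factorial : ℝ) * (1/2)^n := by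
  rw [Dc]
  rw [norm_mul, norm_mul, norm_mul, norm_pow, norm_pow]
  simp only [norm_neg, norm_one, Complex.norm_natCast, norm_div,
    Complex.norm_I, Complex.norm_ofNat, one_pow]
  have : (1/2 : ℝ)^(n+1) * ‖HH n‖ ≤ (1/2)^(n+1) * 2 := by
    apply mul_le_mul_of_nonneg_left (normHH_le n) (by positivity)
  calc (n.factorial : ℝ) * 1 * (1/2)^(n+1) * ‖HH n‖
      ≤ (n.factorial : ℝ) * ((1/2)^(n+1) * 2) := by
        nlinarith [normHH_le n, norm_nonneg (HH n), pow_nonneg (by norm_num : (0:ℝ) ≤ 1/2) (n+1),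
          (by exact_mod_cast n.factorial_pos : (0:ℝ) < (n.factorial : ℝ))]
    _ = (n.factorial : ℝ) * (1/2)^n := by
        rw [pow_succ]; ring

lemma BB_lower : ∀ n : ℕ, (n.factorial : ℝ) ≤ (-1)^n * BB n := by
  intro n
  induction n using Nat.twoStepInduction with
  | zero => simp [BB]
  | one => simp [BB]
  | more n ih ih1 =>
    have hB : BB (n+2) = -(2*(n:ℝ)+3) * BB (n+1) + ((n:ℝ)+1)^2 * BB n := by simp [BB]
    have e : (-1:ℝ)^(n+2) * BB (n+2)
        = (2*(n:ℝ)+3) * ((-1)^(n+1) * BB (n+1)) + ((n:ℝ)+1)^2 * ((-1)^n * BB n) := by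
      rw [hB]; ring
    rw [e]
    have hf : ((n+2).factorial : ℝ) = ((n:ℝ)+2) * ((n+1).factorial : ℝ) := by
      rw [Nat.factorial_succ]; push_cast; ring
    have hf1 : ((n+1).factorial : ℝ) = ((n:ℝ)+1) * (n.factorial : ℝ) := by
      rw [Nat.factorial_succ]; push_cast; ring
    have h1 : (0:ℝ) ≤ (n:ℝ) := Nat.cast_nonneg n
    have h2 : (0:ℝ) < (n.factorial : ℝ) := by exact_mod_cast n.factorial_pos
    nlinarith [ih, ih1]

lemma BB_ne (n : ℕ) : BB n ≠ 0 := by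
  intro h0
  have h := BB_lower n
  have hp : (0:ℝ) < (n.factorial : ℝ) := by exact_mod_cast n.factorial_pos
  rw [h0, mul_zero] at h
  linarith

theorem stmt_16 (a b : ℕ → ℝ)
    (ha1 : a 1 = 1) (ha : ∀ n, 2 ≤ n → a n = ((n : ℝ) - 1)^2)
    (hb : ∀ n, 1 ≤ n → b n = -(2*(n : ℝ) - 1)) :
    Filter.Tendsto (fun n => convergent a b n) Filter.atTop (nhds (-(Real.pi / 4))) := by
  have hconv : ∀ n : ℕ, convergent a b n = AA n / BB n := by
    intro n
    cases n with
    | zero => simp [convergent, cfAux, AA, BB]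
    | succ n =>
      rw [convergent, ← cfX_zero a b (n+1) 1, conv_eq a b ha1 ha hb n 0 le_rfl]
      simp
  have key : ∀ n : ℕ, |convergent a b n - (-(Real.pi/4))| ≤ (1/2)^n := by
    intro n
    rw [hconv n]
    have hB := BB_ne n
    have e : AA n / BB n - (-(Real.pi/4)) = (AA n + BB n * (Real.pi/4)) / BB n := by
      field_simp
      ring
    rw [e, abs_div]
    have h1 : |AA n + BB n * (Real.pi/4)| ≤ (n.factorial : ℝ) * (1/2)^n := by
      have h := absDc_le n
      rw [← keyD n, Complex.norm_real, Real.norm_eq_abs] at h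
      exact h
    have h2 : (n.factorial : ℝ) ≤ |BB n| := by
      have h3 : (-1:ℝ)^n * BB n ≤ |BB n| := by
        calc (-1:ℝ)^n * BB n ≤ |(-1)^n * BB n| := le_abs_self _
          _ = |BB n| := by rw [abs_mul, abs_pow]; simp
      linarith [BB_lower n]
    have hfp : (0:ℝ) < (n.factorial : ℝ) := by exact_mod_cast n.factorial_pos
    calc |AA n + BB n * (Real.pi/4)| / |BB n|
        ≤ ((n.factorial : ℝ) * (1/2)^n) / (n.factorial : ℝ) := by
          apply div_le_div₀ (by positivity) h1 hfp h2
      _ = (1/2)^n := by field_simp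
  have h0 : Filter.Tendsto (fun n : ℕ => ((1:ℝ)/2)^n) Filter.atTop (nhds 0) :=
    tendsto_pow_atTop_nhds_zero_of_lt_one (by norm_num) (by norm_num)
  have h1 : Filter.Tendsto (fun n => convergent a b n - (-(Real.pi/4))) Filter.atTop (nhds 0) := by
    apply squeeze_zero_norm (fun n => ?_) h0
    simpa [Real.norm_eq_abs] using key n
  have h2 := h1.add_const (-(Real.pi/4))
  simpa using h2
end
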